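/- Let d ≥ 2 and let P be a d×d real matrix with nonnegative entries, row sums at most 1, and Pⁿ → 0 entrywise as n → ∞; set R = I − Pᵀ. Suppose there are constants C, M ≥ 1 and α ∈ (0, 1) with (R⁻¹)_{ij} ≤ C α^{j−i} for all 1 ≤ i ≤ j ≤ d and (R⁻¹)_{ij} ≤ M for all 1 ≤ i, j ≤ d. Fix α < β < δ < 1, set C̃ = M/((1−δ)(1−β/δ)) + C(α/δ)/((1−α/δ)(1−β/δ)) and C̃' = max{1, C/(1 − α/β) + M β/(1 − β)}. Let x ∈ ℝ^d have nonnegative entries, let u = ∑_{i=1}^d β^i (R⁻¹ x)_i, and let 1 ≤ d' ≤ d−1 be an integer. If u ≥ 2 C̃' C̃ · (max_{1 ≤ j ≤ d} δ^j x_j) · (β/δ)^{d'+1}, then ∑_{i=1}^{d'} β^i x_i ≥ u/(2 C̃'). -/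

import Mathlib

open Matrix Finset

lemma geom_aux (r : ℝ) (h0 : 0 ≤ r) (h1 : r < 1) (n : ℕ) :
    ∑ k ∈ Finset.range n, r ^ k ≤ 1 / (1 - r) := by
  have hlt : 0 < 1 - r := by linarith
  rw [geom_sum_eq (by linarith : r ≠ 1)]
  have hne : r - 1 ≠ 0 := by linarith
  have hne2 : (1 : ℝ) - r ≠ 0 := by linarith
  have heq : (r ^ n - 1) / (r - 1) = (1 - r ^ n) / (1 - r) := by
    field_simp
    ring
  rw [heq]
  have hp := pow_nonneg h0 n
  rw [div_le_div_iff₀ hlt hlt]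
  nlinarith

lemma tail_aux (r : ℝ) (h0 : 0 ≤ r) (h1 : r < 1) (a n : ℕ) :
    ∑ k ∈ Finset.range n, (if a ≤ k then r ^ k else 0) ≤ r ^ a / (1 - r) := by
  have hfil : (Finset.range n).filter (fun k => a ≤ k) = Finset.Ico a n := by
    ext k; simp [Finset.mem_filter, Finset.mem_range, Finset.mem_Ico]; omega
  rw [← Finset.sum_filter, hfil, Finset.sum_Ico_eq_sum_range]
  simp_rw [pow_add]
  rw [← Finset.mul_sum]
  calc r ^ a * ∑ k ∈ Finset.range (n - a), r ^ k
      ≤ r ^ a * (1 / (1 - r)) :=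
        mul_le_mul_of_nonneg_left (geom_aux r h0 h1 _) (pow_nonneg h0 a)
    _ = r ^ a / (1 - r) := by ring

lemma head_aux (q : ℝ) (h0 : 0 ≤ q) (h1 : q < 1) (n j : ℕ) (hj : j < n) :
    ∑ k ∈ Finset.range n, (if k ≤ j then q ^ (j - k) else 0) ≤ 1 / (1 - q) := by
  have hfil : (Finset.range n).filter (fun k => k ≤ j) = Finset.range (j + 1) := by
    ext k; simp [Finset.mem_filter, Finset.mem_range]; omega
  rw [← Finset.sum_filter, hfil]
  have : ∑ k ∈ Finset.range (j + 1), q ^ (j - k)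
      = ∑ k ∈ Finset.range (j + 1), q ^ k := by
    rw [← Finset.sum_range_reflect (fun i => q ^ i) (j + 1)]
    simp
  rw [this]
  exact geom_aux q h0 h1 _

/-- Key deterministic step of the local contraction lemma: if the weighted functional
`u = ∑ βⁱ (R⁻¹x)_i` exceeds `2C̃'C̃ ‖x‖_{∞,δ} (β/δ)^{d'+1}`, then the first `d'` weighted
coordinates of `x` carry at least a fraction `1/(2C̃')` of `u`. Indices of `Fin d` are 0-based,
so the paper's 1-based index `i` corresponds to `(i : ℕ) + 1`. -/
theorem stmt11 (d : ℕ) (hd : 2 ≤ d) (P : Matrix (Fin d) (Fin d) ℝ)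
    (hnn : ∀ i j, 0 ≤ P i j)
    (hrow : ∀ i, ∑ j, P i j ≤ 1)
    (htrans : ∀ i j, Filter.Tendsto (fun n => (P ^ n) i j) Filter.atTop (nhds 0))
    (R : Matrix (Fin d) (Fin d) ℝ) (hR : R = 1 - Pᵀ)
    (C M α β δ : ℝ) (hC : 1 ≤ C) (hM : 1 ≤ M)
    (hα0 : 0 < α) (hαβ : α < β) (hβδ : β < δ) (hδ1 : δ < 1)
    (hgeo : ∀ i j : Fin d, (i : ℕ) ≤ (j : ℕ) → R⁻¹ i j ≤ C * α ^ ((j : ℕ) - (i : ℕ)))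
    (hbdd : ∀ i j, R⁻¹ i j ≤ M)
    (Ctil Ctil' : ℝ)
    (hCtil : Ctil = M / ((1 - δ) * (1 - β / δ)) + C * (α / δ) / ((1 - α / δ) * (1 - β / δ)))
    (hCtil' : Ctil' = max 1 (C / (1 - α / β) + M * β / (1 - β)))
    (x : Fin d → ℝ) (hx : ∀ i, 0 ≤ x i)
    (u : ℝ) (hu : u = ∑ i : Fin d, β ^ ((i : ℕ) + 1) * (R⁻¹ *ᵥ x) i)
    (d' : ℕ) (hd'1 : 1 ≤ d') (hd'2 : d' ≤ d - 1)
    (hbig : 2 * Ctil' * Ctil *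
        (univ.sup' ⟨⟨0, by omega⟩, mem_univ _⟩ (fun j : Fin d => δ ^ ((j : ℕ) + 1) * x j)) *
        (β / δ) ^ (d' + 1) ≤ u) :
    u / (2 * Ctil') ≤ ∑ i ∈ univ.filter (fun i : Fin d => (i : ℕ) < d'),
      β ^ ((i : ℕ) + 1) * x i := by
  have hβ0 : 0 < β := lt_trans hα0 hαβ
  have hδ0 : 0 < δ := lt_trans hβ0 hβδ
  have hβ1 : β < 1 := lt_trans hβδ hδ1
  have hq0 : 0 ≤ α / β := le_of_lt (div_pos hα0 hβ0)
  have hq1 : α / β < 1 := (div_lt_one hβ0).mpr hαβ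
  have hr0 : 0 ≤ β / δ := le_of_lt (div_pos hβ0 hδ0)
  have hr1 : β / δ < 1 := (div_lt_one hδ0).mpr hβδ
  set N : ℝ := univ.sup' ⟨⟨0, by omega⟩, mem_univ _⟩
      (fun j : Fin d => δ ^ ((j : ℕ) + 1) * x j) with hN
  have hCtil'1 : 1 ≤ Ctil' := hCtil' ▸ le_max_left _ _
  have hCtil'pos : 0 < Ctil' := lt_of_lt_of_le one_pos hCtil'1
  have hC0 : 0 < C := lt_of_lt_of_le one_pos hC
  have hM0 : 0 < M := lt_of_lt_of_le one_pos hM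
  have hN0 : 0 ≤ N := by
    refine le_trans ?_ (Finset.le_sup' _ (mem_univ (⟨0, by omega⟩ : Fin d)))
    exact mul_nonneg (le_of_lt (pow_pos hδ0 _)) (hx _)
  -- Step A: column bound
  have colbd : ∀ j : Fin d, ∑ i : Fin d, β ^ ((i : ℕ) + 1) * R⁻¹ i j ≤ Ctil' * β ^ ((j : ℕ) + 1) := by
    intro j
    have step1 : ∑ i : Fin d, β ^ ((i : ℕ) + 1) * R⁻¹ i j
        ≤ ∑ i : Fin d, ((if (i : ℕ) ≤ (j : ℕ) then C * β ^ ((j : ℕ) + 1) * (α / β) ^ ((j : ℕ) - (i : ℕ)) else 0)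
          + (if (i : ℕ) ≤ (j : ℕ) then 0 else M * β ^ ((i : ℕ) + 1))) := by
      apply Finset.sum_le_sum
      intro i _
      by_cases hij : (i : ℕ) ≤ (j : ℕ)
      · simp only [hij, if_true, add_zero]
        have h1 : R⁻¹ i j ≤ C * α ^ ((j : ℕ) - (i : ℕ)) := hgeo i j hij
        have hkey : C * β ^ ((j : ℕ) + 1) * (α / β) ^ ((j : ℕ) - (i : ℕ))
            = β ^ ((i : ℕ) + 1) * (C * α ^ ((j : ℕ) - (i : ℕ))) := by
          rw [div_pow]
          rw [show ((j : ℕ) + 1) = ((i : ℕ) + 1) + ((j : ℕ) - (i : ℕ)) by omega, pow_add]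
          field_simp
        rw [hkey]
        exact mul_le_mul_of_nonneg_left h1 (le_of_lt (pow_pos hβ0 _))
      · simp only [hij, if_false, zero_add]
        rw [mul_comm M _]
        exact mul_le_mul_of_nonneg_left (hbdd i j) (le_of_lt (pow_pos hβ0 _))
    rw [Finset.sum_add_distrib] at step1
    have sum1 : ∑ i : Fin d, (if (i : ℕ) ≤ (j : ℕ) then C * β ^ ((j : ℕ) + 1) * (α / β) ^ ((j : ℕ) - (i : ℕ)) else 0)
        ≤ C * β ^ ((j : ℕ) + 1) * (1 / (1 - α / β)) := by
      have : ∑ i : Fin d, (if (i : ℕ) ≤ (j : ℕ) then C * β ^ ((j : ℕ) + 1) * (α / β) ^ ((j : ℕ) - (i : ℕ)) else 0)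
          = C * β ^ ((j : ℕ) + 1) * ∑ k ∈ Finset.range d, (if k ≤ (j : ℕ) then (α / β) ^ ((j : ℕ) - k) else 0) := by
        rw [Finset.mul_sum, ← Fin.sum_univ_eq_sum_range]
        apply Finset.sum_congr rfl
        intro i _
        by_cases hij : (i : ℕ) ≤ (j : ℕ) <;> simp [hij]
      rw [this]
      exact mul_le_mul_of_nonneg_left (head_aux _ hq0 hq1 d _ j.isLt)
        (by positivity)
    have sum2 : ∑ i : Fin d, (if (i : ℕ) ≤ (j : ℕ) then 0 else M * β ^ ((i : ℕ) + 1))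
        ≤ M * β * (β ^ ((j : ℕ) + 1) / (1 - β)) := by
      have heq : ∑ i : Fin d, (if (i : ℕ) ≤ (j : ℕ) then (0:ℝ) else M * β ^ ((i : ℕ) + 1))
          = M * β * ∑ k ∈ Finset.range d, (if (j : ℕ) + 1 ≤ k then β ^ k else 0) := by
        rw [Finset.mul_sum, ← Fin.sum_univ_eq_sum_range]
        apply Finset.sum_congr rfl
        intro i _
        by_cases hij : (i : ℕ) ≤ (j : ℕ)
        · simp [hij, show ¬ ((j : ℕ) + 1 ≤ (i : ℕ)) by omega]
        · simp only [hij, if_false, show ((j : ℕ) + 1 ≤ (i : ℕ)) by omega, if_true]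
          ring
      rw [heq]
      exact mul_le_mul_of_nonneg_left (tail_aux β (le_of_lt hβ0) hβ1 ((j : ℕ) + 1) d)
        (mul_nonneg (le_of_lt hM0) (le_of_lt hβ0))
    have hle : C / (1 - α / β) + M * β / (1 - β) ≤ Ctil' := hCtil' ▸ le_max_right _ _
    have hβj : (0:ℝ) ≤ β ^ ((j : ℕ) + 1) := le_of_lt (pow_pos hβ0 _)
    calc ∑ i : Fin d, β ^ ((i : ℕ) + 1) * R⁻¹ i j
        ≤ C * β ^ ((j : ℕ) + 1) * (1 / (1 - α / β)) + M * β * (β ^ ((j : ℕ) + 1) / (1 - β)) :=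
          le_trans step1 (add_le_add sum1 sum2)
      _ = (C / (1 - α / β) + M * β / (1 - β)) * β ^ ((j : ℕ) + 1) := by ring
      _ ≤ Ctil' * β ^ ((j : ℕ) + 1) := mul_le_mul_of_nonneg_right hle hβj
  -- Step B: u ≤ Ctil' * ∑ β^{j+1} x j
  have hswap : u = ∑ j : Fin d, (∑ i : Fin d, β ^ ((i : ℕ) + 1) * R⁻¹ i j) * x j := by
    rw [hu]
    simp_rw [mulVec, dotProduct, Finset.mul_sum, Finset.sum_mul]
    rw [Finset.sum_comm]
    apply Finset.sum_congr rfl; intro j _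
    apply Finset.sum_congr rfl; intro i _
    ring
  have stepB : u ≤ Ctil' * ∑ j : Fin d, β ^ ((j : ℕ) + 1) * x j := by
    rw [hswap, Finset.mul_sum]
    apply Finset.sum_le_sum
    intro j _
    have := mul_le_mul_of_nonneg_right (colbd j) (hx j)
    calc (∑ i : Fin d, β ^ ((i : ℕ) + 1) * R⁻¹ i j) * x j
        ≤ Ctil' * β ^ ((j : ℕ) + 1) * x j := this
      _ = Ctil' * (β ^ ((j : ℕ) + 1) * x j) := by ring
  -- split into head S and tail T
  set S : ℝ := ∑ i ∈ univ.filter (fun i : Fin d => (i : ℕ) < d'), β ^ ((i : ℕ) + 1) * x i with hS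
  set T : ℝ := ∑ i ∈ univ.filter (fun i : Fin d => ¬ ((i : ℕ) < d')), β ^ ((i : ℕ) + 1) * x i with hT
  have hsplit : ∑ j : Fin d, β ^ ((j : ℕ) + 1) * x j = S + T :=
    (Finset.sum_filter_add_sum_filter_not univ _ _).symm
  -- tail bound
  have tailbd : T ≤ N * ((β / δ) ^ (d' + 1) / (1 - β / δ)) := by
    have hTle : T ≤ ∑ k ∈ Finset.range d, (if d' + 1 ≤ k + 1 then N * (β / δ) ^ (k + 1) else 0) := by
      rw [hT, Finset.sum_filter, ← Fin.sum_univ_eq_sum_range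
        (fun k => if d' + 1 ≤ k + 1 then N * (β / δ) ^ (k + 1) else 0) d]
      apply Finset.sum_le_sum
      intro i _
      by_cases hid : (i : ℕ) < d'
      · simp [hid, show ¬ (d' + 1 ≤ (i : ℕ) + 1) by omega]
      · simp only [hid, if_false, if_true, show d' + 1 ≤ (i : ℕ) + 1 by omega]
        have hxi : δ ^ ((i : ℕ) + 1) * x i ≤ N := by
          rw [hN]; exact Finset.le_sup' (fun j : Fin d => δ ^ ((j : ℕ) + 1) * x j) (mem_univ i)
        have heq2 : β ^ ((i : ℕ) + 1) * x i = (β / δ) ^ ((i : ℕ) + 1) * (δ ^ ((i : ℕ) + 1) * x i) := by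
          rw [div_pow]; field_simp
        rw [heq2]
        calc (β / δ) ^ ((i : ℕ) + 1) * (δ ^ ((i : ℕ) + 1) * x i)
            ≤ (β / δ) ^ ((i : ℕ) + 1) * N :=
              mul_le_mul_of_nonneg_left hxi (pow_nonneg hr0 _)
          _ = N * (β / δ) ^ ((i : ℕ) + 1) := mul_comm _ _
    have heq : ∑ k ∈ Finset.range d, (if d' + 1 ≤ k + 1 then N * (β / δ) ^ (k + 1) else 0)
        = N * (β / δ) * ∑ k ∈ Finset.range d, (if d' ≤ k then (β / δ) ^ k else 0) := by
      rw [Finset.mul_sum]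
      apply Finset.sum_congr rfl
      intro k _
      by_cases hk : d' ≤ k
      · simp only [hk, if_true, show d' + 1 ≤ k + 1 by omega]
        rw [pow_succ]; ring
      · simp [hk, show ¬ (d' + 1 ≤ k + 1) by omega]
    have := tail_aux (β / δ) hr0 hr1 d' d
    calc T ≤ N * (β / δ) * ∑ k ∈ Finset.range d, (if d' ≤ k then (β / δ) ^ k else 0) := by
          rw [← heq]; exact hTle
      _ ≤ N * (β / δ) * ((β / δ) ^ d' / (1 - β / δ)) :=
          mul_le_mul_of_nonneg_left this (mul_nonneg hN0 hr0)
      _ = N * ((β / δ) ^ (d' + 1) / (1 - β / δ)) := by rw [pow_succ]; ring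
  -- 1/(1-β/δ) ≤ Ctil
  have hCtilge : 1 / (1 - β / δ) ≤ Ctil := by
    rw [hCtil]
    have h1 : 0 < 1 - β / δ := by linarith
    have h2 : 0 < 1 - δ := by linarith
    have h3 : 0 < 1 - α / δ := by
      have : α / δ < 1 := (div_lt_one hδ0).mpr (by linarith)
      linarith
    have hpos2 : 0 ≤ C * (α / δ) / ((1 - α / δ) * (1 - β / δ)) := by positivity
    have hfirst : 1 / (1 - β / δ) ≤ M / ((1 - δ) * (1 - β / δ)) := by
      rw [div_le_div_iff₀ h1 (by positivity)]
      nlinarith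
    linarith
  -- combine
  have hub : Ctil' * T ≤ u / 2 := by
    have h1 : Ctil' * T ≤ Ctil' * (N * Ctil * (β / δ) ^ (d' + 1)) := by
      apply mul_le_mul_of_nonneg_left _ (le_of_lt hCtil'pos)
      calc T ≤ N * ((β / δ) ^ (d' + 1) / (1 - β / δ)) := tailbd
        _ = N * (β / δ) ^ (d' + 1) * (1 / (1 - β / δ)) := by ring
        _ ≤ N * (β / δ) ^ (d' + 1) * Ctil :=
            mul_le_mul_of_nonneg_left hCtilge (mul_nonneg hN0 (pow_nonneg hr0 _))
        _ = N * Ctil * (β / δ) ^ (d' + 1) := by ring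
    have h2 : Ctil' * (N * Ctil * (β / δ) ^ (d' + 1)) = (2 * Ctil' * Ctil * N * (β / δ) ^ (d' + 1)) / 2 := by
      ring
    rw [h2] at h1
    calc Ctil' * T ≤ (2 * Ctil' * Ctil * N * (β / δ) ^ (d' + 1)) / 2 := h1
      _ ≤ u / 2 := by linarith
  have hfin : u ≤ Ctil' * S + u / 2 := by
    calc u ≤ Ctil' * (S + T) := by rw [← hsplit]; exact stepB
      _ = Ctil' * S + Ctil' * T := by ring
      _ ≤ Ctil' * S + u / 2 := by linarith
  rw [div_le_iff₀ (by positivity)]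
  nlinarith
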